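/- For any random variables X ~ p and Y ~ q and measurable bounded f, E_p[log σ(f(X))] + E_q[log σ(-f(Y))] ≤ log σ(E_p[f(X)] - E_q[f(Y)]). -/

import Mathlib

open MeasureTheory

noncomputable def logisticSigmoid (x : ℝ) : ℝ := Real.exp x / (1 + Real.exp x)

noncomputable def softplus (x : ℝ) : ℝ := Real.log (1 + Real.exp x)

lemma one_add_exp_pos (x : ℝ) : (0:ℝ) < 1 + Real.exp x := by positivity

lemma log_logisticSigmoid (x : ℝ) : Real.log (logisticSigmoid x) = x - softplus x := by
  unfold logisticSigmoid softplus
  rw [Real.log_div (Real.exp_ne_zero x) (ne_of_gt (one_add_exp_pos x)), Real.log_exp]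

lemma softplus_hasDerivAt (x : ℝ) :
    HasDerivAt softplus (Real.exp x / (1 + Real.exp x)) x := by
  have h : HasDerivAt (fun y => 1 + Real.exp y) (Real.exp x) x :=
    (Real.hasDerivAt_exp x).const_add 1
  exact h.log (ne_of_gt (one_add_exp_pos x))

lemma softplus_deriv : deriv softplus = fun x => Real.exp x / (1 + Real.exp x) := by
  funext x; exact (softplus_hasDerivAt x).deriv

lemma sigma_hasDerivAt (x : ℝ) :
    HasDerivAt (fun y => Real.exp y / (1 + Real.exp y))
      (Real.exp x / (1 + Real.exp x) ^ 2) x := by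
  have h := (Real.hasDerivAt_exp x).div ((Real.hasDerivAt_exp x).const_add 1)
    (ne_of_gt (one_add_exp_pos x))
  convert h using 1
  · rfl
  · rfl
  · rfl
  congr 1
  ring

lemma softplus_convex : ConvexOn ℝ Set.univ softplus := by
  apply convexOn_of_deriv2_nonneg' convex_univ
  · intro x _; exact (softplus_hasDerivAt x).differentiableAt.differentiableWithinAt
  · intro x _
    rw [softplus_deriv]
    exact (sigma_hasDerivAt x).differentiableAt.differentiableWithinAt
  · intro x _
    have : deriv^[2] softplus x = Real.exp x / (1 + Real.exp x) ^ 2 := by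
      show deriv (deriv softplus) x = _
      rw [softplus_deriv]
      exact (sigma_hasDerivAt x).deriv
    rw [this]; positivity

lemma logsig_concave : ConcaveOn ℝ Set.univ (fun x => Real.log (logisticSigmoid x)) := by
  have h : ConcaveOn ℝ Set.univ (fun x : ℝ => x - softplus x) := by
    have h1 : ConcaveOn ℝ Set.univ (fun x : ℝ => x) :=
      (LinearMap.id (R := ℝ) (M := ℝ)).concaveOn convex_univ
    exact h1.sub softplus_convex
  convert h using 1
  funext x; exact log_logisticSigmoid x

lemma logsig_continuous : Continuous (fun x => Real.log (logisticSigmoid x)) := by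
  have : (fun x => Real.log (logisticSigmoid x)) = fun x => x - softplus x := by
    funext x; exact log_logisticSigmoid x
  rw [this]
  exact continuous_id.sub ((continuous_const.add Real.continuous_exp).log
    fun x => ne_of_gt (one_add_exp_pos x))

lemma sp_sub_le (a b : ℝ) : softplus (a - b) ≤ softplus a + softplus (-b) := by
  unfold softplus
  rw [← Real.log_mul (ne_of_gt (one_add_exp_pos a)) (ne_of_gt (one_add_exp_pos (-b)))]
  apply Real.log_le_log (one_add_exp_pos _)
  have h1 : Real.exp (a - b) = Real.exp a * Real.exp (-b) := by rw [← Real.exp_add]; ring_nf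
  nlinarith [Real.exp_pos a, Real.exp_pos (-b), Real.exp_pos (a - b)]

lemma jensen_step {𝒳 : Type*} [MeasurableSpace 𝒳] (μ : Measure 𝒳) [IsProbabilityMeasure μ]
    (g : 𝒳 → ℝ) (hg : Measurable g) (M : ℝ) (hM : ∀ x, |g x| ≤ M) :
    (∫ x, Real.log (logisticSigmoid (g x)) ∂μ) ≤ Real.log (logisticSigmoid (∫ x, g x ∂μ)) := by
  have hgi : Integrable g μ := by
    apply Integrable.mono' (integrable_const M) hg.aestronglyMeasurable
    exact Filter.Eventually.of_forall hM
  have hcomp : Integrable ((fun t => Real.log (logisticSigmoid t)) ∘ g) μ := by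
    have hc : Continuous fun t => Real.log (logisticSigmoid t) := logsig_continuous
    obtain ⟨C, hC⟩ := (isCompact_Icc (a := -M) (b := M)).exists_bound_of_continuousOn
      hc.continuousOn
    apply Integrable.mono' (integrable_const C)
      (hc.measurable.comp hg).aestronglyMeasurable
    refine Filter.Eventually.of_forall fun x => hC (g x) (abs_le.mp (hM x))
  exact logsig_concave.le_map_integral logsig_continuous.continuousOn isClosed_univ
    (Filter.Eventually.of_forall fun x => trivial) hgi hcomp

theorem mean_embedding_upper_bound_expectation
    {𝒳 : Type*} [MeasurableSpace 𝒳]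
    (p q : Measure 𝒳) [IsProbabilityMeasure p] [IsProbabilityMeasure q]
    (f : 𝒳 → ℝ) (hf : Measurable f) (M : ℝ) (hM : ∀ x, |f x| ≤ M) :
    (∫ x, Real.log (logisticSigmoid (f x)) ∂p) +
      (∫ y, Real.log (logisticSigmoid (-(f y))) ∂q) ≤
    Real.log (logisticSigmoid ((∫ x, f x ∂p) - ∫ y, f y ∂q)) := by
  have h1 := jensen_step p f hf M hM
  have h2 := jensen_step q (fun y => -(f y)) hf.neg M (by intro x; simpa using hM x)
  have hq : (∫ y, -(f y) ∂q) = -(∫ y, f y ∂q) := integral_neg f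
  rw [hq] at h2
  set a := ∫ x, f x ∂p
  set b := ∫ y, f y ∂q
  have key : Real.log (logisticSigmoid a) + Real.log (logisticSigmoid (-b)) ≤
      Real.log (logisticSigmoid (a - b)) := by
    rw [log_logisticSigmoid, log_logisticSigmoid, log_logisticSigmoid]
    have := sp_sub_le a b
    linarith
  linarith
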